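/- Let 0 < λ_min ≤ λ_max < ∞ and κ := λ_max/λ_min. If Σ and Σ′ are d×d real symmetric positive definite matrices all of whose eigenvalues lie in [λ_min, λ_max], then κ^{−1/2} I_d ⪯ T_{Σ→Σ′} ⪯ κ^{1/2} I_d, i.e., every eigenvalue of the transport map T_{Σ→Σ′} lies in the interval [1/√κ, √κ]. -/

import Mathlib

open Matrix
open scoped Classical

/-- Symmetric PSD square root of a positive semidefinite matrix (junk value `0` otherwise). -/
noncomputable def msqrt {d : ℕ} (M : Matrix (Fin d) (Fin d) ℝ) : Matrix (Fin d) (Fin d) ℝ :=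
  if h : M.PosSemidef then h.1.eigenvectorUnitary.1 * diagonal ((↑) ∘ (Real.sqrt ·) ∘ h.1.eigenvalues) *
    (star h.1.eigenvectorUnitary : Matrix (Fin d) (Fin d) ℝ) else 0

/-- Optimal transport map `T_{A→B} = A^{-1/2} (A^{1/2} B A^{1/2})^{1/2} A^{-1/2}`. -/
noncomputable def Tmap {d : ℕ} (A B : Matrix (Fin d) (Fin d) ℝ) : Matrix (Fin d) (Fin d) ℝ :=
  (msqrt A)⁻¹ * msqrt (msqrt A * B * msqrt A) * (msqrt A)⁻¹

/-- Squared Bures–Wasserstein distance `tr(A + B - 2 (A^{1/2} B A^{1/2})^{1/2})`. -/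
noncomputable def W2sq {d : ℕ} (A B : Matrix (Fin d) (Fin d) ℝ) : ℝ :=
  (A + B - (2 : ℝ) • msqrt (msqrt A * B * msqrt A)).trace

/-- Bures–Wasserstein distance. -/
noncomputable def W2 {d : ℕ} (A B : Matrix (Fin d) (Fin d) ℝ) : ℝ :=
  Real.sqrt (W2sq A B)

/-- Smallest eigenvalue of a (hermitian) matrix. -/
noncomputable def lamMin {d : ℕ} (M : Matrix (Fin d) (Fin d) ℝ) : ℝ :=
  if h : M.IsHermitian then ⨅ i, h.eigenvalues i else 0

/-- Largest eigenvalue of a (hermitian) matrix. -/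
noncomputable def lamMax {d : ℕ} (M : Matrix (Fin d) (Fin d) ℝ) : ℝ :=
  if h : M.IsHermitian then ⨆ i, h.eigenvalues i else 0

/-- `Kset a b` : symmetric positive definite matrices with all eigenvalues in `[a, b]`,
expressed via the Loewner order `a • I ⪯ S ⪯ b • I`. -/
def Kset {d : ℕ} (a b : ℝ) : Set (Matrix (Fin d) (Fin d) ℝ) :=
  {S | S.PosDef ∧ (S - a • (1 : Matrix (Fin d) (Fin d) ℝ)).PosSemidef ∧
    (b • (1 : Matrix (Fin d) (Fin d) ℝ) - S).PosSemidef}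

/-- Barycenter functional `F(S) = (1/(2N)) ∑ᵢ W₂²(S, Σᵢ)`. -/
noncomputable def Fbar {d N : ℕ} (Ss : Fin N → Matrix (Fin d) (Fin d) ℝ)
    (S : Matrix (Fin d) (Fin d) ℝ) : ℝ :=
  (1 / (2 * (N : ℝ))) * ∑ i, W2sq S (Ss i)

/-- Bures–Wasserstein gradient of the barycenter functional: `I - (1/N) ∑ᵢ T_{S→Σᵢ}`. -/
noncomputable def gradF {d N : ℕ} (Ss : Fin N → Matrix (Fin d) (Fin d) ℝ)
    (S : Matrix (Fin d) (Fin d) ℝ) : Matrix (Fin d) (Fin d) ℝ :=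
  1 - (N : ℝ)⁻¹ • ∑ i, Tmap S (Ss i)

/-- `‖A‖_S² = tr(A S A)`. -/

noncomputable def normAtSq {d : ℕ} (A S : Matrix (Fin d) (Fin d) ℝ) : ℝ :=
  (A * S * A).trace

section Aux
variable {d : ℕ}

lemma psd_smul {M : Matrix (Fin d) (Fin d) ℝ} (hM : M.PosSemidef) {c : ℝ} (hc : 0 ≤ c) :
    (c • M).PosSemidef := by
  refine PosSemidef.of_dotProduct_mulVec_nonneg ?_ fun x => ?_
  · rw [Matrix.IsHermitian, conjTranspose_smul, star_trivial, hM.1.eq]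
  · rw [smul_mulVec, dotProduct_smul]
    exact smul_nonneg hc (hM.dotProduct_mulVec_nonneg x)

lemma sq_psd_eig_le {T : Matrix (Fin d) (Fin d) ℝ} (hT : T.IsHermitian) {c : ℝ}
    (h : (T * T - c • 1).PosSemidef) (i : Fin d) : c ≤ hT.eigenvalues i ^ 2 := by
  set v : Fin d → ℝ := ⇑(hT.eigenvectorBasis i) with hv
  have hvec : T *ᵥ v = hT.eigenvalues i • v := hT.mulVec_eigenvectorBasis i
  have hmv : (T * T - c • 1) *ᵥ v = (hT.eigenvalues i ^ 2 - c) • v := by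
    rw [sub_mulVec, ← mulVec_mulVec, hvec, mulVec_smul, hvec, smul_smul, smul_mulVec,
      one_mulVec, sub_smul, sq]
  have hv0 : v ≠ 0 := by
    have h0 := hT.eigenvectorBasis.orthonormal.ne_zero i
    intro hcon
    exact h0 (by ext j; exact congrFun hcon j)
  have hpos : 0 < v ⬝ᵥ v := by
    have := dotProduct_star_self_pos_iff (v := v) |>.mpr hv0
    simpa using this
  have h2 := h.dotProduct_mulVec_nonneg v
  rw [hmv] at h2
  have h3 : 0 ≤ (hT.eigenvalues i ^ 2 - c) * (v ⬝ᵥ v) := by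
    simpa [dotProduct_smul, smul_eq_mul] using h2
  nlinarith

lemma sq_psd_eig_ge {T : Matrix (Fin d) (Fin d) ℝ} (hT : T.IsHermitian) {c : ℝ}
    (h : (c • 1 - T * T).PosSemidef) (i : Fin d) : hT.eigenvalues i ^ 2 ≤ c := by
  set v : Fin d → ℝ := ⇑(hT.eigenvectorBasis i) with hv
  have hvec : T *ᵥ v = hT.eigenvalues i • v := hT.mulVec_eigenvectorBasis i
  have hmv : (c • 1 - T * T) *ᵥ v = (c - hT.eigenvalues i ^ 2) • v := by
    rw [sub_mulVec, ← mulVec_mulVec, hvec, mulVec_smul, hvec, smul_smul, smul_mulVec,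
      one_mulVec, sub_smul, sq]
  have hv0 : v ≠ 0 := by
    have h0 := hT.eigenvectorBasis.orthonormal.ne_zero i
    intro hcon
    exact h0 (by ext j; exact congrFun hcon j)
  have hpos : 0 < v ⬝ᵥ v := by
    have := dotProduct_star_self_pos_iff (v := v) |>.mpr hv0
    simpa using this
  have h2 := h.dotProduct_mulVec_nonneg v
  rw [hmv] at h2
  have h3 : 0 ≤ (c - hT.eigenvalues i ^ 2) * (v ⬝ᵥ v) := by
    simpa [dotProduct_smul, smul_eq_mul] using h2
  nlinarith

lemma sub_smul_one_psd {T : Matrix (Fin d) (Fin d) ℝ} (hT : T.IsHermitian) {c : ℝ}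
    (h : ∀ i, c ≤ hT.eigenvalues i) : (T - c • 1).PosSemidef := by
  have hsp := hT.spectral_theorem
  simp only [Unitary.conjStarAlgAut_apply] at hsp
  set U : Matrix (Fin d) (Fin d) ℝ := (hT.eigenvectorUnitary : Matrix (Fin d) (Fin d) ℝ) with hU
  have hUU : U * star U = 1 := mem_unitaryGroup_iff.mp hT.eigenvectorUnitary.2
  have hdiag : diagonal (fun i => hT.eigenvalues i - c)
      = diagonal (RCLike.ofReal ∘ hT.eigenvalues) - c • (1 : Matrix (Fin d) (Fin d) ℝ) := by
    rw [smul_one_eq_diagonal, diagonal_sub]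
    congr 1
  have key : T - c • 1 = U * diagonal (fun i => hT.eigenvalues i - c) * star U := by
    rw [hdiag, mul_sub, sub_mul, ← hsp, mul_smul_comm, mul_one, smul_mul_assoc, hUU]
  rw [key, star_eq_conjTranspose]
  exact (Matrix.PosSemidef.diagonal (fun i => sub_nonneg.mpr (h i))).mul_mul_conjTranspose_same U

lemma smul_one_sub_psd {T : Matrix (Fin d) (Fin d) ℝ} (hT : T.IsHermitian) {c : ℝ}
    (h : ∀ i, hT.eigenvalues i ≤ c) : (c • 1 - T).PosSemidef := by
  have hsp := hT.spectral_theorem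
  simp only [Unitary.conjStarAlgAut_apply] at hsp
  set U : Matrix (Fin d) (Fin d) ℝ := (hT.eigenvectorUnitary : Matrix (Fin d) (Fin d) ℝ) with hU
  have hUU : U * star U = 1 := mem_unitaryGroup_iff.mp hT.eigenvectorUnitary.2
  have hdiag : diagonal (fun i => c - hT.eigenvalues i)
      = c • (1 : Matrix (Fin d) (Fin d) ℝ) - diagonal (RCLike.ofReal ∘ hT.eigenvalues) := by
    rw [smul_one_eq_diagonal, diagonal_sub]
    congr 1
  have key : c • (1 : Matrix (Fin d) (Fin d) ℝ) - T
      = U * diagonal (fun i => c - hT.eigenvalues i) * star U := by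
    rw [hdiag, mul_sub, sub_mul, ← hsp, mul_smul_comm, mul_one, smul_mul_assoc, hUU]
  rw [key, star_eq_conjTranspose]
  exact (Matrix.PosSemidef.diagonal (fun i => sub_nonneg.mpr (h i))).mul_mul_conjTranspose_same U

lemma sqrt_loewner_lower {T : Matrix (Fin d) (Fin d) ℝ} (hT : T.PosSemidef) {c : ℝ} (hc : 0 ≤ c)
    (h : (T * T - (c ^ 2) • 1).PosSemidef) : (T - c • 1).PosSemidef := by
  apply sub_smul_one_psd hT.1
  intro i
  have h1 := sq_psd_eig_le hT.1 h i
  have h2 := hT.eigenvalues_nonneg i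
  nlinarith

lemma sqrt_loewner_upper {T : Matrix (Fin d) (Fin d) ℝ} (hT : T.PosSemidef) {c : ℝ} (hc : 0 ≤ c)
    (h : ((c ^ 2) • 1 - T * T).PosSemidef) : (c • 1 - T).PosSemidef := by
  apply smul_one_sub_psd hT.1
  intro i
  have h1 := sq_psd_eig_ge hT.1 h i
  have h2 := hT.eigenvalues_nonneg i
  nlinarith

end Aux


lemma msqrt_psd {d : ℕ} {M : Matrix (Fin d) (Fin d) ℝ} (h : M.PosSemidef) : (msqrt M).PosSemidef := by
  rw [msqrt, dif_pos h, star_eq_conjTranspose]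
  exact (PosSemidef.diagonal (fun i => Real.sqrt_nonneg _)).mul_mul_conjTranspose_same _

lemma msqrt_mul_self {d : ℕ} {M : Matrix (Fin d) (Fin d) ℝ} (h : M.PosSemidef) :
    msqrt M * msqrt M = M := by
  have hsp := h.1.spectral_theorem
  simp only [Unitary.conjStarAlgAut_apply] at hsp
  have hUU := Unitary.coe_star_mul_self h.1.eigenvectorUnitary
  rw [msqrt, dif_pos h]
  conv_rhs => rw [hsp]
  simp only [Matrix.mul_assoc]
  rw [← Matrix.mul_assoc (star _) (h.1.eigenvectorUnitary : Matrix (Fin d) (Fin d) ℝ), hUU,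
    Matrix.one_mul, ← Matrix.mul_assoc (diagonal _) (diagonal _), diagonal_mul_diagonal]
  congr 3
  funext i
  simp [Real.mul_self_sqrt (h.eigenvalues_nonneg i)]


/-- Eigenvalues of the optimal transport map between matrices conditioned in
`[l, u]` lie in `[1/√κ, √κ]` for `κ = u / l`. -/
theorem transport_map_eigenvalue_bounds {d : ℕ} (l u : ℝ) (hl : 0 < l) (hlu : l ≤ u)
    (A B : Matrix (Fin d) (Fin d) ℝ) (hA : A ∈ Kset l u) (hB : B ∈ Kset l u) :
    (Tmap A B - (Real.sqrt (u / l))⁻¹ • (1 : Matrix (Fin d) (Fin d) ℝ)).PosSemidef ∧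
    (Real.sqrt (u / l) • (1 : Matrix (Fin d) (Fin d) ℝ) - Tmap A B).PosSemidef := by
  obtain ⟨hApd, hAl, hAu⟩ := hA
  obtain ⟨hBpd, hBl, hBu⟩ := hB
  have hu : 0 < u := lt_of_lt_of_le hl hlu
  have hApsd := hApd.posSemidef
  have hBpsd := hBpd.posSemidef
  have hmsA : msqrt A = msqrt A := rfl
  set sA := msqrt A with hsAdef
  have hsA : sA.PosSemidef := msqrt_psd hApsd
  have hsA2 : sA * sA = A := msqrt_mul_self hApsd
  have hdetA : 0 < A.det := hApd.det_pos
  have hdetsA : IsUnit sA.det := by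
    refine isUnit_iff_ne_zero.mpr fun h0 => ?_
    rw [← hsA2, det_mul, h0, mul_zero] at hdetA
    exact lt_irrefl _ hdetA
  have hinv1 : sA⁻¹ * sA = 1 := nonsing_inv_mul _ hdetsA
  have hinv2 : sA * sA⁻¹ = 1 := mul_nonsing_inv _ hdetsA
  have hMpsd : (sA * B * sA).PosSemidef := by
    have := hBpsd.mul_mul_conjTranspose_same sA
    rwa [hsA.1.eq] at this
  have hmsM : msqrt (sA * B * sA) = msqrt (sA * B * sA) := rfl
  set S := msqrt (sA * B * sA) with hSdef
  have hSpsd : S.PosSemidef := msqrt_psd hMpsd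
  have hS2 : S * S = sA * B * sA := msqrt_mul_self hMpsd
  have hT : Tmap A B = sA⁻¹ * S * sA⁻¹ := by
    rfl
  have hRH : (sA⁻¹)ᴴ = sA⁻¹ := by
    rw [conjTranspose_nonsing_inv, hsA.1.eq]
  set Tm := sA⁻¹ * S * sA⁻¹ with hTmdef
  have hTpsd : Tm.PosSemidef := by
    have := hSpsd.mul_mul_conjTranspose_same sA⁻¹
    rwa [hRH] at this
  have hTAT : Tm * A * Tm = B := by
    rw [hTmdef, ← hsA2]
    simp only [Matrix.mul_assoc]
    rw [nonsing_inv_mul_cancel_left _ _ hdetsA, mul_nonsing_inv_cancel_left _ _ hdetsA,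
      ← Matrix.mul_assoc S S, hS2]
    simp only [Matrix.mul_assoc]
    rw [hinv2, mul_one, nonsing_inv_mul_cancel_left _ _ hdetsA]
  have e1 : Tm * (u • (1 : Matrix (Fin d) (Fin d) ℝ) - A) * Tm = u • (Tm * Tm) - B := by
    rw [mul_sub, sub_mul, mul_smul_comm, mul_one, smul_mul_assoc, hTAT]
  have h1 : (u • (Tm * Tm) - B).PosSemidef := by
    rw [← e1]
    have := hAu.mul_mul_conjTranspose_same Tm
    rwa [hTpsd.1.eq] at this
  have e2 : Tm * (A - l • (1 : Matrix (Fin d) (Fin d) ℝ)) * Tm = B - l • (Tm * Tm) := by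
    rw [mul_sub, sub_mul, mul_smul_comm, mul_one, smul_mul_assoc, hTAT]
  have h2 : (B - l • (Tm * Tm)).PosSemidef := by
    rw [← e2]
    have := hAl.mul_mul_conjTranspose_same Tm
    rwa [hTpsd.1.eq] at this
  have hu0 : (u : ℝ) ≠ 0 := ne_of_gt hu
  have hl0 : (l : ℝ) ≠ 0 := ne_of_gt hl
  have elow : u⁻¹ • ((u • (Tm * Tm) - B) + (B - l • (1 : Matrix (Fin d) (Fin d) ℝ)))
      = Tm * Tm - (l / u) • 1 := by
    rw [sub_add_sub_cancel, smul_sub, smul_smul, smul_smul, inv_mul_cancel₀ hu0, one_smul,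
      inv_mul_eq_div]
  have hlow2 : (Tm * Tm - (l / u) • (1 : Matrix (Fin d) (Fin d) ℝ)).PosSemidef := by
    rw [← elow]
    exact psd_smul (h1.add hBl) (inv_nonneg.mpr hu.le)
  have ehigh : l⁻¹ • ((u • (1 : Matrix (Fin d) (Fin d) ℝ) - B) + (B - l • (Tm * Tm)))
      = (u / l) • 1 - Tm * Tm := by
    rw [sub_add_sub_cancel, smul_sub, smul_smul, smul_smul, inv_mul_cancel₀ hl0, one_smul,
      inv_mul_eq_div]
  have hhigh2 : ((u / l) • (1 : Matrix (Fin d) (Fin d) ℝ) - Tm * Tm).PosSemidef := by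
    rw [← ehigh]
    exact psd_smul (hBu.add h2) (inv_nonneg.mpr hl.le)
  have hql : 0 ≤ l / u := by positivity
  have hqu : 0 ≤ u / l := by positivity
  constructor
  · rw [hT, show (Real.sqrt (u / l))⁻¹ = Real.sqrt (l / u) by
      rw [← Real.sqrt_inv, inv_div]]
    exact sqrt_loewner_lower hTpsd (Real.sqrt_nonneg _)
      (by rw [Real.sq_sqrt hql]; exact hlow2)
  · rw [hT]
    exact sqrt_loewner_upper hTpsd (Real.sqrt_nonneg _)
      (by rw [Real.sq_sqrt hqu]; exact hhigh2)
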